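/- arXiv:math/0412054 — 7 statements merged into one kernel-verified Lean document; each statement's English description precedes it below -/
import Mathlib

section
/- Let K be a field of characteristic zero, let f(t) = Σ_{n≥0} a_n t^n/n! be a formal power series in K[[t]] with a_0 = 1 and a_1 ≠ 0, and let g(t) = Σ_{n≥0} g_n t^n/n! be a formal power series with g_0 = 1. If the formal composition satisfies g(f(t) − 1) = 1 + t, then for every integer k ≥ 1 one has g_k = (k−1)! · [t^{k−1}]( (t/(f(t)−1))^k ), where t/(f(t)−1) denotes the multiplicative inverse in K[[t]] of the power series (f(t)−1)/t (which has nonzero constant term a_1), and [t^{k−1}] denotes the coefficient of t^{k−1}. -/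
open Finset Polynomial

/-- Exponential generating function of a sequence. -/
noncomputable def egf {R : Type*} [CommRing R] [Algebra ℚ R] (a : ℕ → R) : PowerSeries R :=
  PowerSeries.mk fun n => ((n.factorial : ℚ)⁻¹) • a n

/-- Formal composition of power series (the correct composition when the inner
series `h` has zero constant term, since then `h ^ n` has order at least `n`). -/
noncomputable def psComp {R : Type*} [CommRing R] (g h : PowerSeries R) : PowerSeries R :=
  PowerSeries.mk fun m =>
    ∑ n ∈ Finset.range (m + 1), (PowerSeries.coeff n g) * (PowerSeries.coeff m (h ^ n))

/-- Partial Bell polynomials of a sequence `a` (with `a 0 = 1`):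
`B_{n,k} = (n!/k!) · [t^n] (f(t) - 1)^k` where `f` is the e.g.f. of `a`. -/
noncomputable def bellPartial {R : Type*} [CommRing R] [Algebra ℚ R] (a : ℕ → R) (n k : ℕ) : R :=
  ((n.factorial : ℚ) / (k.factorial : ℚ)) • (PowerSeries.coeff n ((egf a - 1) ^ k))

/-- Stirling numbers of the second kind. -/
def stirling2 : ℕ → ℕ → ℕ
  | 0, 0 => 1
  | 0, _ + 1 => 0
  | _ + 1, 0 => 0
  | n + 1, k + 1 => (k + 1) * stirling2 n (k + 1) + stirling2 n k

/-- Bell numbers. -/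
def bellNum (n : ℕ) : ℕ := ∑ k ∈ Finset.range (n + 1), stirling2 n k

/-- Signed Stirling numbers of the first kind, defined as the coefficients of the
falling factorial `x (x-1) ⋯ (x-n+1) = Σ_k s(n,k) x^k`. -/
noncomputable def stirling1 (n k : ℕ) : ℚ := (descPochhammer ℚ n).coeff k

open PowerSeries in
private lemma key_inv_deriv {K : Type*} [Field K] [CharZero K] (q : PowerSeries K) (m : ℕ) :
    PowerSeries.coeff (m + 1) (q⁻¹ ^ (m + 1)) =
      - PowerSeries.coeff m (q⁻¹ ^ (m + 2) * d⁄dX K q) := by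
  have hD : d⁄dX K (q⁻¹ ^ (m + 1)) = -((m + 1 : ℕ) • (q⁻¹ ^ (m + 2) * d⁄dX K q)) := by
    rw [Derivation.leibniz_pow, Nat.add_sub_cancel, PowerSeries.derivative_inv']
    simp only [smul_eq_mul, nsmul_eq_mul]
    ring
  have h1 := PowerSeries.coeff_derivative (q⁻¹ ^ (m + 1)) m
  rw [hD, map_neg, map_nsmul, nsmul_eq_mul] at h1
  have hm : ((m : K) + 1) ≠ 0 := Nat.cast_add_one_ne_zero m
  have h2 : PowerSeries.coeff (m + 1) (q⁻¹ ^ (m + 1)) * ((m : K) + 1) =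
      (- PowerSeries.coeff m (q⁻¹ ^ (m + 2) * d⁄dX K q)) * ((m : K) + 1) := by
    rw [← h1]; push_cast; ring
  exact mul_right_cancel₀ hm h2


open PowerSeries in
/-- **Lagrange inversion formula** (exponential form). If `f` is the e.g.f. of `a`
with `a 0 = 1`, `a 1 ≠ 0`, `g` is the e.g.f. of a sequence `b` with `b 0 = 1`, and
`g(f(t) - 1) = 1 + t`, then `g_k = (k-1)! · [t^{k-1}] ((t/(f(t)-1))^k)`, where
`q` is the series with `q · t = f(t) - 1` (so `t/(f(t)-1) = q⁻¹`). -/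
theorem lagrange_inversion (K : Type*) [Field K] [CharZero K]
    (a b : ℕ → K) (ha0 : a 0 = 1) (ha1 : a 1 ≠ 0) (hb0 : b 0 = 1)
    (hcomp : psComp (egf b) (egf a - 1) = 1 + PowerSeries.X)
    (q : PowerSeries K) (hq : q * PowerSeries.X = egf a - 1) :
    ∀ k : ℕ, 1 ≤ k →
      b k = ((k - 1).factorial : K) * PowerSeries.coeff (k - 1) (q⁻¹ ^ k) := by
  intro k hk
  obtain ⟨n, rfl⟩ : ∃ n, k = n + 1 := ⟨k - 1, (Nat.succ_pred_eq_of_pos hk).symm⟩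
  simp only [Nat.add_sub_cancel]
  set u : PowerSeries K := egf a - 1 with hu
  set r : PowerSeries K := q⁻¹ with hr
  set D : Derivation K (PowerSeries K) (PowerSeries K) := d⁄dX K with hD
  -- constant coefficient of q
  have hq0 : constantCoeff q = a 1 := by
    have h1 := congrArg (PowerSeries.coeff 1) hq
    rw [PowerSeries.coeff_succ_mul_X] at h1
    rw [← PowerSeries.coeff_zero_eq_constantCoeff_apply, h1]
    simp [hu, egf, PowerSeries.coeff_one]
  have hqne : constantCoeff q ≠ 0 := by rw [hq0]; exact ha1
  have hrq : r * q = 1 := PowerSeries.inv_mul_cancel q hqne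
  have hXu : (PowerSeries.X : PowerSeries K) ∣ u := ⟨q, by rw [← hq]; ring⟩
  set c : ℕ → K := fun j => PowerSeries.coeff j (egf b) with hc
  set S : PowerSeries K := ∑ j ∈ Finset.range (n + 2), c j • u ^ j with hS
  -- S agrees with 1 + X up to coefficient n+1
  have hScoeff : ∀ m ≤ n + 1, PowerSeries.coeff m S = PowerSeries.coeff m (1 + PowerSeries.X) := by
    intro m hm
    have h1 := congrArg (PowerSeries.coeff m) hcomp
    rw [psComp, PowerSeries.coeff_mk] at h1
    rw [hS, map_sum, ← h1]
    simp only [map_smul, smul_eq_mul]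
    apply (Finset.sum_subset (by intro x hx; simp only [Finset.mem_range] at hx ⊢; omega) ?_).symm
    intro j hj hjm
    simp only [Finset.mem_range] at hj hjm
    have hmj : m < j := by omega
    have hz : PowerSeries.coeff m (u ^ j) = 0 := by
      have hd : (PowerSeries.X : PowerSeries K) ^ j ∣ u ^ j := pow_dvd_pow_of_dvd hXu j
      exact (PowerSeries.X_pow_dvd_iff.mp hd) m hmj
    rw [hz, mul_zero]
  -- derivative of S agrees with 1 up to coefficient n
  have hdvd : (PowerSeries.X : PowerSeries K) ^ (n + 1) ∣ (D S - 1) := by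
    rw [PowerSeries.X_pow_dvd_iff]
    intro m hm
    rw [map_sub, hD, PowerSeries.coeff_derivative, hScoeff (m + 1) (by omega)]
    rcases Nat.eq_zero_or_pos m with h0 | hpos
    · subst h0; simp [PowerSeries.coeff_one, PowerSeries.coeff_X]
    · have h1 : m + 1 ≠ 1 := by omega
      have h2 : m ≠ 0 := by omega
      simp [PowerSeries.coeff_one, PowerSeries.coeff_X, h1, h2]
  -- hence the target coefficient
  have h3 : PowerSeries.coeff n (r ^ (n + 1) * D S) = PowerSeries.coeff n (r ^ (n + 1)) := by
    have hz : PowerSeries.coeff n (r ^ (n + 1) * (D S - 1)) = 0 := by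
      obtain ⟨w, hw⟩ := hdvd
      rw [hw, show r ^ (n + 1) * (PowerSeries.X ^ (n + 1) * w)
            = (r ^ (n + 1) * w) * PowerSeries.X ^ (n + 1) by ring,
          PowerSeries.coeff_mul_X_pow']
      simp
    rw [mul_sub, mul_one, map_sub, sub_eq_zero] at hz
    exact hz
  -- per-term computation
  have hterm : ∀ j ∈ Finset.range (n + 2),
      PowerSeries.coeff n (r ^ (n + 1) * D (u ^ j)) = if j = n + 1 then ((n : K) + 1) else 0 := by
    intro j hj
    simp only [Finset.mem_range] at hj
    match j with
    | 0 =>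
      rw [pow_zero, Derivation.map_one_eq_zero, mul_zero, map_zero]
      simp
    | (i + 1) =>
      have hiu : i + 1 ≤ n + 1 := by omega
      have hui : u = q * PowerSeries.X := hq.symm
      have hDu : D u = D q * PowerSeries.X + q := by
        rw [hui, Derivation.leibniz, hD]
        simp only [PowerSeries.derivative_X, smul_eq_mul, mul_one]
        ring
      have hupow : u ^ i = q ^ i * PowerSeries.X ^ i := by rw [hui, mul_pow]
      have hDpow : D (u ^ (i + 1)) =
          (i + 1) • (q ^ i * PowerSeries.X ^ i * (D q * PowerSeries.X + q)) := by
        rw [Derivation.leibniz_pow, Nat.add_sub_cancel, hupow, hDu, smul_eq_mul]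
      have hsplit : r ^ (n + 1) * D (u ^ (i + 1)) =
          (i + 1) • ((r ^ (n + 1) * q ^ i * D q) * PowerSeries.X ^ (i + 1)
            + (r ^ (n + 1) * q ^ (i + 1)) * PowerSeries.X ^ i) := by
        rw [hDpow]
        simp only [nsmul_eq_mul]
        ring
      rw [hsplit, map_nsmul, nsmul_eq_mul, map_add]
      rcases eq_or_lt_of_le hiu with he | hlt
      · -- j = n + 1, i.e. i = n
        have hin : i = n := by omega
        subst hin
        have h1 : r ^ (i + 1) * q ^ (i + 1) = 1 := by rw [← mul_pow, hrq, one_pow]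
        rw [PowerSeries.coeff_mul_X_pow', if_neg (by omega), h1, one_mul,
          PowerSeries.coeff_X_pow, if_pos rfl, if_pos rfl]
        push_cast
        ring
      · -- j = i + 1 ≤ n
        have hile : i + 1 ≤ n := by omega
        obtain ⟨m, hm⟩ : ∃ m, n = m + 1 + i := ⟨n - 1 - i, by omega⟩
        have hA : r ^ (n + 1) * q ^ i = r ^ (m + 2) := by
          have : r ^ (n + 1) = r ^ (m + 2) * r ^ i := by rw [← pow_add]; congr 1; omega
          rw [this, mul_assoc, ← mul_pow, hrq, one_pow, mul_one]
        have hB : r ^ (n + 1) * q ^ (i + 1) = r ^ (m + 1) := by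
          have : r ^ (n + 1) = r ^ (m + 1) * r ^ (i + 1) := by rw [← pow_add]; congr 1; omega
          rw [this, mul_assoc, ← mul_pow, hrq, one_pow, mul_one]
        rw [if_neg (by omega)]
        rw [PowerSeries.coeff_mul_X_pow', if_pos (by omega), PowerSeries.coeff_mul_X_pow', if_pos (by omega)]
        have hn1 : n - (i + 1) = m := by omega
        have hn2 : n - i = m + 1 := by omega
        rw [hn1, hn2, hA, hB]
        have hkey := key_inv_deriv q m
        rw [← hr, ← hD] at hkey
        rw [hkey]
        ring
  -- assemble
  have hDS : D S = ∑ j ∈ Finset.range (n + 2), c j • D (u ^ j) := by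
    rw [hS, map_sum]
    exact Finset.sum_congr rfl fun j _ => D.map_smul (c j) (u ^ j)
  have hmain : c (n + 1) * ((n : K) + 1) = PowerSeries.coeff n (r ^ (n + 1)) := by
    rw [← h3, hDS, Finset.mul_sum, map_sum]
    have : ∀ j ∈ Finset.range (n + 2),
        PowerSeries.coeff n (r ^ (n + 1) * c j • D (u ^ j))
          = if j = n + 1 then c j * ((n : K) + 1) else 0 := by
      intro j hj
      rw [mul_smul_comm, map_smul, smul_eq_mul, hterm j hj]
      split_ifs <;> simp
    rw [Finset.sum_congr rfl this, Finset.sum_ite_eq' (Finset.range (n + 2)) (n + 1)]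
    rw [if_pos (by simp)]
  -- final arithmetic
  have hcval : c (n + 1) = (((n + 1).factorial : K))⁻¹ * b (n + 1) := by
    simp [hc, egf, PowerSeries.coeff_mk, Rat.smul_def]
  rw [hcval] at hmain
  have h1 : (((n + 1).factorial : K)) ≠ 0 := Nat.cast_ne_zero.mpr (Nat.factorial_ne_zero _)
  have h2 : ((n : K) + 1) ≠ 0 := Nat.cast_add_one_ne_zero n
  have hfac : (((n + 1).factorial : K)) = ((n : K) + 1) * (n.factorial : K) := by
    rw [Nat.factorial_succ]; push_cast; ring
  have h3' : (n.factorial : K) ≠ 0 := Nat.cast_ne_zero.mpr (Nat.factorial_ne_zero _)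
  field_simp [hfac] at hmain
  apply mul_right_cancel₀ h2
  rw [hmain]
  rw [hfac]
  ring
end

section
/- Let (b_n)_{n≥0} be a sequence of rational numbers. Then Σ_{k=0}^n s(n,k) b_k = 1 for all n ≥ 0 if and only if b_0 = 1 and b_{n+1} = Σ_{k=0}^n C(n,k) b_k for all n ≥ 0 (the recursion characterizing the Bell numbers). Here s(n,k) are the signed Stirling numbers of the first kind and C(n,k) are binomial coefficients. -/
open Finset Polynomial

/- ===== auxiliary ===== -/

/-- The umbral functional associated to a sequence. -/
noncomputable def Lfun (b : ℕ → ℚ) (p : ℚ[X]) : ℚ := p.sum fun k c => c * b k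

lemma Lfun_eq_sum_range (b : ℕ → ℚ) (p : ℚ[X]) {n : ℕ} (h : p.natDegree ≤ n) :
    Lfun b p = ∑ k ∈ Finset.range (n + 1), p.coeff k * b k :=
  Polynomial.sum_over_range' p (fun n => zero_mul (b n)) (n + 1) (Nat.lt_succ_of_le h)

lemma Lfun_add (b : ℕ → ℚ) (p q : ℚ[X]) : Lfun b (p + q) = Lfun b p + Lfun b q :=
  Polynomial.sum_add_index p q _ (fun n => zero_mul (b n)) (fun _ _ _ => add_mul _ _ _)

lemma Lfun_monomial (b : ℕ → ℚ) (n : ℕ) (a : ℚ) : Lfun b (monomial n a) = a * b n :=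
  Polynomial.sum_monomial_index a _ (zero_mul (b n))

lemma Lfun_smul (b : ℕ → ℚ) (a : ℚ) (p : ℚ[X]) : Lfun b (a • p) = a * Lfun b p := by
  rw [Lfun, Polynomial.sum_smul_index p a _ (fun n => zero_mul (b n))]
  simp [Lfun, Polynomial.sum, Finset.mul_sum, mul_assoc]

lemma Lfun_one (b : ℕ → ℚ) : Lfun b 1 = b 0 := by
  simpa using Lfun_monomial b 0 1

lemma Lfun_stirling (b : ℕ → ℚ) (n : ℕ) :
    Lfun b (descPochhammer ℚ n) = ∑ k ∈ Finset.range (n + 1), stirling1 n k * b k := by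
  rw [Lfun_eq_sum_range b _ (le_of_eq (descPochhammer_natDegree ℚ n))]
  rfl

lemma Lfun_X_add_one_pow (b : ℕ → ℚ) (n : ℕ) :
    Lfun b ((X + 1) ^ n) = ∑ k ∈ Finset.range (n + 1), (n.choose k : ℚ) * b k := by
  have hd : ((X + 1 : ℚ[X]) ^ n).natDegree ≤ n := by
    refine natDegree_pow_le.trans ?_
    have : (X + 1 : ℚ[X]) = X + C 1 := by simp
    rw [this, natDegree_X_add_C]; omega
  rw [Lfun_eq_sum_range b _ hd]
  simp [coeff_X_add_one_pow]

/-- The key umbral lemma: if `b` satisfies the Bell recursion, then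
`L (X * p) = L (p.comp (X + 1))` for all `p`. -/
lemma Lfun_shift (b : ℕ → ℚ) (hb0 : b 0 = 1)
    (hrec : ∀ n : ℕ, b (n + 1) = ∑ k ∈ Finset.range (n + 1), (n.choose k : ℚ) * b k)
    (p : ℚ[X]) : Lfun b (X * p) = Lfun b (p.comp (X + 1)) := by
  induction p using Polynomial.induction_on' with
  | add p q hp hq => rw [mul_add, Lfun_add, add_comp, Lfun_add, hp, hq]
  | monomial n a =>
      rw [X_mul_monomial, Lfun_monomial, monomial_comp, ← smul_eq_C_mul, Lfun_smul,
        Lfun_X_add_one_pow, ← hrec, mul_comm]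

lemma bell_recursion_implies_moments (b : ℕ → ℚ) (hb0 : b 0 = 1)
    (hrec : ∀ n : ℕ, b (n + 1) = ∑ k ∈ Finset.range (n + 1), (n.choose k : ℚ) * b k)
    (n : ℕ) : Lfun b (descPochhammer ℚ n) = 1 := by
  induction n with
  | zero => simpa [Lfun_one] using hb0
  | succ n ih =>
      rw [descPochhammer_succ_left, Lfun_shift b hb0 hrec, comp_assoc]
      have : ((X : ℚ[X]) - 1).comp (X + 1) = X := by
        simp [sub_comp]
      rw [this, comp_X, ih]

/-- Uniqueness: the falling-factorial-moment condition determines the sequence. -/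
lemma moments_unique (b c : ℕ → ℚ)
    (hb : ∀ n : ℕ, ∑ k ∈ Finset.range (n + 1), stirling1 n k * b k = 1)
    (hc : ∀ n : ℕ, ∑ k ∈ Finset.range (n + 1), stirling1 n k * c k = 1) : b = c := by
  funext n
  induction n using Nat.strong_induction_on with
  | _ n ih =>
    have hbn := hb n
    have hcn := hc n
    rw [Finset.sum_range_succ] at hbn hcn
    have hs : stirling1 n n = 1 := by
      have hm := (monic_descPochhammer ℚ n).coeff_natDegree
      rwa [descPochhammer_natDegree] at hm
    have hsum : ∑ k ∈ Finset.range n, stirling1 n k * b k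
        = ∑ k ∈ Finset.range n, stirling1 n k * c k := by
      apply Finset.sum_congr rfl
      intro k hk
      rw [ih k (Finset.mem_range.mp hk)]
    rw [hs, one_mul] at hbn hcn
    linarith [hbn, hcn, hsum]

/-- The canonical sequence satisfying the Bell recursion. -/
def bellSeq : ℕ → ℚ
  | 0 => 1
  | n + 1 => ∑ k ∈ (Finset.range (n + 1)).attach,
      (n.choose k.1 : ℚ) * bellSeq k.1
  decreasing_by exact Finset.mem_range.mp k.2

lemma bellSeq_succ (n : ℕ) :
    bellSeq (n + 1) = ∑ k ∈ Finset.range (n + 1), (n.choose k : ℚ) * bellSeq k := by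
  rw [bellSeq]
  exact Finset.sum_attach (Finset.range (n + 1)) (fun k => (n.choose k : ℚ) * bellSeq k)

lemma bellSeq_zero : bellSeq 0 = 1 := by rw [bellSeq]

/-- A sequence of rationals has all falling-factorial moments equal to `1`
iff it satisfies the Bell-number recursion. -/
theorem bell_umbra_characterization (b : ℕ → ℚ) :
    (∀ n : ℕ, ∑ k ∈ Finset.range (n + 1), stirling1 n k * b k = 1) ↔
      (b 0 = 1 ∧ ∀ n : ℕ, b (n + 1) = ∑ k ∈ Finset.range (n + 1), (n.choose k : ℚ) * b k) := by
  constructor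
  · intro h
    have hbell : ∀ n : ℕ, ∑ k ∈ Finset.range (n + 1), stirling1 n k * bellSeq k = 1 := by
      intro n
      rw [← Lfun_stirling]
      exact bell_recursion_implies_moments bellSeq bellSeq_zero bellSeq_succ n
    have heq : b = bellSeq := moments_unique b bellSeq h hbell
    subst heq
    exact ⟨bellSeq_zero, bellSeq_succ⟩
  · rintro ⟨hb0, hrec⟩ n
    rw [← Lfun_stirling]
    exact bell_recursion_implies_moments b hb0 hrec n
end

section
/- For every nonnegative integer n, the n-th Bell number satisfies Dobinski's formula: B_n = e^{−1} · Σ_{k=0}^∞ k^n / k!, where the series on the right converges in ℝ. -/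
open Finset Polynomial

lemma stirling2_eq_zero' : ∀ n k : ℕ, n < k → stirling2 n k = 0
  | 0, _ + 1, _ => rfl
  | n + 1, k + 1, h => by
    rw [stirling2, stirling2_eq_zero' n (k+1) (by omega), stirling2_eq_zero' n k (by omega)]; ring

lemma pow_eq_sum_stirling2 (n k : ℕ) :
    k ^ n = ∑ j ∈ Finset.range (n + 1), stirling2 n j * k.descFactorial j := by
  induction n with
  | zero => simp [stirling2]
  | succ n ih =>
    have key : ∀ j, k * k.descFactorial j = k.descFactorial (j+1) + j * k.descFactorial j := by
      intro j
      rw [Nat.descFactorial_succ]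
      rcases le_or_gt j k with h | h
      · rw [← Nat.add_mul, Nat.sub_add_cancel h]
      · rw [Nat.descFactorial_eq_zero_iff_lt.mpr h]; ring
    have step1 : k ^ (n+1) =
        (∑ j ∈ Finset.range (n+1), stirling2 n j * k.descFactorial (j+1)) +
        ∑ j ∈ Finset.range (n+1), j * stirling2 n j * k.descFactorial j := by
      rw [pow_succ, ih, Finset.sum_mul, ← Finset.sum_add_distrib]
      congr 1; ext j
      rw [mul_assoc, mul_comm (Nat.descFactorial k j), key j]; ring
    have step2 : (∑ j ∈ Finset.range (n+1), j * stirling2 n j * k.descFactorial j)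
        = ∑ j ∈ Finset.range (n+1), (j+1) * stirling2 n (j+1) * k.descFactorial (j+1) := by
      have h1 := Finset.sum_range_succ' (fun j => j * stirling2 n j * k.descFactorial j) (n+1)
      have h2 := Finset.sum_range_succ (fun j => j * stirling2 n j * k.descFactorial j) (n+1)
      simp only [stirling2_eq_zero' n (n+1) (Nat.lt_succ_self n)] at h2
      simp only [Nat.zero_mul, Nat.mul_zero, Nat.add_zero, Nat.zero_mul] at h1 h2
      omega
    rw [step1, step2, ← Finset.sum_add_distrib,
      Finset.sum_range_succ' (fun j => stirling2 (n+1) j * k.descFactorial j) (n+1)]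
    simp only [show stirling2 (n+1) 0 = 0 from rfl, Nat.zero_mul, Nat.add_zero]
    congr 1; ext j
    show stirling2 n j * k.descFactorial (j+1) + (j+1) * stirling2 n (j+1) * k.descFactorial (j+1)
      = stirling2 (n+1) (j+1) * k.descFactorial (j+1)
    rw [stirling2]; ring

lemma hasSum_descFactorial_div_factorial (j : ℕ) :
    HasSum (fun k : ℕ => (k.descFactorial j : ℝ) / (k.factorial : ℝ)) (Real.exp 1) := by
  have he : HasSum (fun m : ℕ => (1 : ℝ) / (m.factorial : ℝ)) (Real.exp 1) := by
    simpa [Real.exp_eq_exp_ℝ] using NormedSpace.expSeries_div_hasSum_exp (1 : ℝ)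
  have hshift : HasSum (fun m : ℕ =>
      (((m + j).descFactorial j : ℝ)) / (((m + j).factorial : ℝ))) (Real.exp 1) := by
    have heq : (fun m : ℕ => (((m + j).descFactorial j : ℝ)) / (((m + j).factorial : ℝ)))
        = fun m : ℕ => (1 : ℝ) / (m.factorial : ℝ) := funext fun m => ?_
    · rw [heq]; exact he
    have h := Nat.factorial_mul_descFactorial (Nat.le_add_left j m)
    rw [Nat.add_sub_cancel] at h
    have h' : (m.factorial : ℝ) * ((m + j).descFactorial j : ℝ) = ((m + j).factorial : ℝ) := by
      exact_mod_cast congrArg (Nat.cast : ℕ → ℝ) h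
    have h1 : (m.factorial : ℝ) ≠ 0 := Nat.cast_ne_zero.mpr m.factorial_ne_zero
    have h2 : ((m + j).factorial : ℝ) ≠ 0 := Nat.cast_ne_zero.mpr (m + j).factorial_ne_zero
    field_simp
    linarith [h']
  have H := (hasSum_nat_add_iff
    (f := fun k : ℕ => (k.descFactorial j : ℝ) / (k.factorial : ℝ)) j).mp hshift
  have hz : ∑ i ∈ Finset.range j, ((i.descFactorial j : ℝ) / (i.factorial : ℝ)) = 0 := by
    refine Finset.sum_eq_zero fun i hi => ?_
    rw [Nat.descFactorial_eq_zero_iff_lt.mpr (Finset.mem_range.mp hi)]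
    simp
  rwa [hz, add_zero] at H

/-- **Dobinski's formula**: `B_n = e⁻¹ · Σ_{k≥0} k^n / k!`. -/
theorem dobinski (n : ℕ) :
    (bellNum n : ℝ) = Real.exp (-1) * ∑' k : ℕ, (k : ℝ) ^ n / (k.factorial : ℝ) := by
  have H : HasSum (fun k : ℕ => (k : ℝ) ^ n / (k.factorial : ℝ))
      ((bellNum n : ℝ) * Real.exp 1) := by
    have h1 : ∀ j ∈ Finset.range (n + 1),
        HasSum (fun k : ℕ => (stirling2 n j : ℝ) * ((k.descFactorial j : ℝ) / (k.factorial : ℝ)))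
          ((stirling2 n j : ℝ) * Real.exp 1) :=
      fun j _ => (hasSum_descFactorial_div_factorial j).mul_left _
    have h2 := hasSum_sum h1
    have heq : (fun k : ℕ => ∑ j ∈ Finset.range (n + 1),
        (stirling2 n j : ℝ) * ((k.descFactorial j : ℝ) / (k.factorial : ℝ)))
        = fun k : ℕ => (k : ℝ) ^ n / (k.factorial : ℝ) := by
      funext k
      rw [show ((k : ℝ) ^ n) = ((k ^ n : ℕ) : ℝ) by push_cast; ring, pow_eq_sum_stirling2 n k,
        Nat.cast_sum, Finset.sum_div]
      congr 1; funext j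
      push_cast; ring
    have hval : (∑ j ∈ Finset.range (n + 1), (stirling2 n j : ℝ) * Real.exp 1)
        = (bellNum n : ℝ) * Real.exp 1 := by
      rw [bellNum, ← Finset.sum_mul, Nat.cast_sum]
    rwa [heq, hval] at h2
  rw [H.tsum_eq, ← mul_assoc, mul_comm (Real.exp (-1)), mul_assoc, ← Real.exp_add]
  simp
end

section
/- In the formal power series ring ℚ[x][[t]], the exponential generating function of the exponential polynomials satisfies Σ_{n≥0} Φ_n(x) t^n/n! = exp( x · (e^t − 1) ), where e^t − 1 = Σ_{n≥1} t^n/n! and exp denotes the formal exponential of a power series with zero constant term. -/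
open Finset Polynomial

section Aux
open PowerSeries
lemma derivative_exp' : d⁄dX ℚ (exp ℚ) = exp ℚ := by
  ext n
  rw [PowerSeries.coeff_derivative, coeff_exp, coeff_exp]
  simp only [Algebra.algebraMap_self, RingHom.id_apply]
  rw [Nat.factorial_succ]
  have h1 : (n.factorial : ℚ) ≠ 0 := Nat.cast_ne_zero.mpr n.factorial_ne_zero
  have h2 : ((n : ℚ) + 1) ≠ 0 := by positivity
  push_cast
  field_simp

lemma key (m k : ℕ) : PowerSeries.coeff (R := ℚ) m ((exp ℚ - 1) ^ k)
    = stirling2 m k * k.factorial / m.factorial := by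
  induction m generalizing k with
  | zero =>
    rw [PowerSeries.coeff_zero_eq_constantCoeff, map_pow, map_sub, constantCoeff_exp, map_one,
      sub_self]
    cases k with
    | zero => simp [stirling2]
    | succ k => simp [stirling2, zero_pow]
  | succ m ih =>
    cases k with
    | zero => simp [stirling2, PowerSeries.coeff_one]
    | succ k =>
      have hD : d⁄dX ℚ ((exp ℚ - 1) ^ (k + 1))
          = ((k : ℚ) + 1) • ((exp ℚ - 1) ^ (k + 1) + (exp ℚ - 1) ^ k) := by
        rw [Derivation.leibniz_pow, map_sub, derivative_exp', Derivation.map_one_eq_zero,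
          sub_zero, smul_eq_mul, PowerSeries.smul_eq_C_mul]
        have : ((PowerSeries.C) ((k:ℚ)+1)) = ((k : ℚ⟦X⟧) + 1) := by rw [map_add, map_one, map_natCast]
        rw [this]
        have h3 : (k + 1 - 1) = k := rfl
        rw [h3]
        push_cast
        ring
      have h2 := congrArg (PowerSeries.coeff m) hD
      rw [PowerSeries.coeff_derivative, map_smul, map_add, ih, ih, smul_eq_mul] at h2
      have hm : ((m : ℚ) + 1) ≠ 0 := by positivity
      apply mul_right_cancel₀ hm
      rw [show ((m:ℚ) + 1) = ((m+1 : ℕ) : ℚ) by push_cast; ring] at h2 ⊢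
      rw [h2]
      rw [show stirling2 (m+1) (k+1) = (k + 1) * stirling2 m (k + 1) + stirling2 m k from rfl,
        Nat.factorial_succ (m), Nat.factorial_succ (k)]
      have hmf : ((m.factorial : ℚ)) ≠ 0 := Nat.cast_ne_zero.mpr m.factorial_ne_zero
      have hm1 : (((m+1) : ℕ) : ℚ) ≠ 0 := by push_cast; positivity
      push_cast
      field_simp

theorem exponential_poly_egf' :
    (PowerSeries.mk fun n => ((n.factorial : ℚ)⁻¹) • (∑ k ∈ Finset.range (n + 1),
        Polynomial.C (stirling2 n k : ℚ) * Polynomial.X ^ k)) =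
      PowerSeries.mk (fun m =>
        ∑ n ∈ Finset.range (m + 1), (PowerSeries.coeff n (PowerSeries.exp (Polynomial ℚ))) *
          (PowerSeries.coeff m ((PowerSeries.C Polynomial.X *
            (PowerSeries.exp (Polynomial ℚ) - 1)) ^ n))) := by
  refine PowerSeries.ext fun m => ?_
  rw [PowerSeries.coeff_mk, PowerSeries.coeff_mk, Finset.smul_sum]
  apply Finset.sum_congr rfl
  intro n hn
  have hC : PowerSeries.coeff m ((exp (Polynomial ℚ) - 1) ^ n)
      = Polynomial.C (PowerSeries.coeff m ((exp ℚ - 1) ^ n)) := by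
    have h : ((exp ℚ[X] : ℚ[X]⟦X⟧) - 1) ^ n
        = PowerSeries.map (Polynomial.C : ℚ →+* ℚ[X]) ((exp ℚ - 1) ^ n) := by
      rw [map_pow, map_sub, map_one, map_exp]
    rw [h, PowerSeries.coeff_map]
  rw [PowerSeries.coeff_exp, mul_pow, ← map_pow, PowerSeries.coeff_C_mul, hC, key,
    Polynomial.smul_eq_C_mul, Polynomial.algebraMap_eq]
  have h1 : (m.factorial : ℚ) ≠ 0 := Nat.cast_ne_zero.mpr m.factorial_ne_zero
  have h2 : (n.factorial : ℚ) ≠ 0 := Nat.cast_ne_zero.mpr n.factorial_ne_zero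
  have heq : Polynomial.C ((m.factorial : ℚ))⁻¹ * Polynomial.C (stirling2 m n : ℚ)
      = Polynomial.C (1 / (n.factorial : ℚ)) *
        Polynomial.C ((stirling2 m n : ℚ) * n.factorial / m.factorial) := by
    rw [← Polynomial.C_mul, ← Polynomial.C_mul]
    congr 1
    field_simp
  linear_combination (Polynomial.X ^ n : ℚ[X]) * heq

end Aux

/-- Generating function of the exponential polynomials:
`Σ_n Φ_n(x) t^n/n! = exp(x (e^t − 1))` in `ℚ[x][[t]]`, where the outer `exp` is the
formal exponential (composition of the exponential series with a series having zero
constant term). -/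
theorem exponential_poly_egf :
    egf (fun n => ∑ k ∈ Finset.range (n + 1),
        Polynomial.C (stirling2 n k : ℚ) * Polynomial.X ^ k) =
      psComp (PowerSeries.exp (Polynomial ℚ))
        (PowerSeries.C Polynomial.X * (PowerSeries.exp (Polynomial ℚ) - 1)) := by
  rw [egf, psComp]
  exact exponential_poly_egf'
end

section
/- Let R be a commutative ℚ-algebra, let a : ℕ → R be a sequence with a_0 = 1, and let g : ℕ → R be a sequence with g_0 = 1. Define c_n = Σ_{k=0}^n g_k · B_{n,k} and d_n = Σ_{k=0}^n g_{k+1} · B_{n,k}, where B_{n,k} are the partial Bell polynomials of the sequence a. Then for all n ≥ 0: c_{n+1} = Σ_{i=0}^n C(n,i) · a_{n−i+1} · d_i. -/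
open Finset Polynomial

section Aux
open PowerSeries

variable {R : Type*} [CommRing R] [Algebra ℚ R]

lemma aux_mul_natsucc (x : R) (m : ℕ) : x * ((m : R) + 1) = (((m : ℚ) + 1)) • x := by
  rw [Algebra.smul_def, map_add, map_natCast, map_one, mul_comm]

lemma aux_coeff_pow_eq_zero {h : PowerSeries R}
    (h0 : PowerSeries.constantCoeff h = 0) {i j : ℕ} (hij : i < j) :
    PowerSeries.coeff i (h ^ j) = 0 :=
  PowerSeries.X_pow_dvd_iff.mp (pow_dvd_pow_of_dvd (PowerSeries.X_dvd_iff.mpr h0) j) i hij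

lemma aux_coeff_deriv_egf (a : ℕ → R) (m : ℕ) :
    PowerSeries.coeff m ((d⁄dX R) (egf a)) = ((m.factorial : ℚ)⁻¹) • a (m + 1) := by
  rw [PowerSeries.coeff_derivative, egf, PowerSeries.coeff_mk, smul_mul_assoc,
    aux_mul_natsucc, smul_smul]
  congr 1
  rw [Nat.factorial_succ]
  have hm : ((m.factorial : ℚ)) ≠ 0 := Nat.cast_ne_zero.mpr m.factorial_ne_zero
  push_cast
  field_simp

/-- Key expansion of `B_{n+1,k+1}`. -/
lemma aux_bell_succ (a : ℕ → R) (n k : ℕ) :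
    bellPartial a (n+1) (k+1) =
      ∑ i ∈ Finset.range (n+1),
        ((n.factorial : ℚ) / ((k.factorial : ℚ) * ((n - i).factorial : ℚ))) •
          (PowerSeries.coeff i ((egf a - 1) ^ k) * a (n - i + 1)) := by
  set f := egf a
  have hD : (d⁄dX R) ((f - 1) ^ (k+1)) = (k+1) • ((f - 1) ^ k * (d⁄dX R) f) := by
    rw [Derivation.leibniz_pow]
    simp [smul_eq_mul]
  have h1 : ((n : ℚ) + 1) • PowerSeries.coeff (n+1) ((f - 1) ^ (k+1))
      = ((k : ℚ) + 1) • PowerSeries.coeff n ((f - 1) ^ k * (d⁄dX R) f) := by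
    have h := PowerSeries.coeff_derivative ((f - 1) ^ (k+1)) n
    rw [hD, map_nsmul, ← Nat.cast_smul_eq_nsmul ℚ] at h
    rw [show (((k+1 : ℕ)) : ℚ) = ((k : ℚ) + 1) by push_cast; ring] at h
    rw [aux_mul_natsucc] at h
    exact h.symm
  have hn : ((n : ℚ) + 1) ≠ 0 := by positivity
  have h2 : PowerSeries.coeff (n+1) ((f - 1) ^ (k+1))
      = (((k : ℚ) + 1) / ((n : ℚ) + 1)) • PowerSeries.coeff n ((f - 1) ^ k * (d⁄dX R) f) := by
    calc PowerSeries.coeff (n+1) ((f - 1) ^ (k+1))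
        = (((n : ℚ) + 1)⁻¹ * ((n : ℚ) + 1)) • PowerSeries.coeff (n+1) ((f - 1) ^ (k+1)) := by
          rw [inv_mul_cancel₀ hn, one_smul]
      _ = ((n : ℚ) + 1)⁻¹ • (((n : ℚ) + 1) • PowerSeries.coeff (n+1) ((f - 1) ^ (k+1))) :=
          mul_smul _ _ _
      _ = ((n : ℚ) + 1)⁻¹ • (((k : ℚ) + 1) • PowerSeries.coeff n ((f - 1) ^ k * (d⁄dX R) f)) := by
          rw [h1]
      _ = (((k : ℚ) + 1) / ((n : ℚ) + 1)) • PowerSeries.coeff n ((f - 1) ^ k * (d⁄dX R) f) := by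
          rw [smul_smul, ← div_eq_inv_mul]
  have h3 : PowerSeries.coeff n ((f - 1) ^ k * (d⁄dX R) f)
      = ∑ i ∈ Finset.range (n+1),
          PowerSeries.coeff i ((f - 1) ^ k) * (((n - i).factorial : ℚ)⁻¹ • a (n - i + 1)) := by
    rw [PowerSeries.coeff_mul, Finset.Nat.sum_antidiagonal_eq_sum_range_succ_mk]
    exact Finset.sum_congr rfl fun i _ => by rw [aux_coeff_deriv_egf]
  rw [bellPartial, h2, h3, Finset.smul_sum, Finset.smul_sum]
  refine Finset.sum_congr rfl fun i hi => ?_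
  rw [mul_smul_comm, smul_smul, smul_smul]
  congr 1
  have hk : ((k.factorial : ℚ)) ≠ 0 := Nat.cast_ne_zero.mpr k.factorial_ne_zero
  have hni : (((n-i).factorial : ℚ)) ≠ 0 := Nat.cast_ne_zero.mpr (n-i).factorial_ne_zero
  have hk1 : ((k : ℚ) + 1) ≠ 0 := by positivity
  rw [Nat.factorial_succ n, Nat.factorial_succ k]
  push_cast
  field_simp

end Aux

/-- Recursion characterizing composition umbrae: with
`c_n = Σ_k g_k B_{n,k}(a)` and `d_n = Σ_k g_{k+1} B_{n,k}(a)`, one has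
`c_{n+1} = Σ_i C(n,i) a_{n−i+1} d_i`. -/
theorem composition_umbra_recursion (R : Type*) [CommRing R] [Algebra ℚ R]
    (a g : ℕ → R) (ha0 : a 0 = 1) (hg0 : g 0 = 1)
    (c d : ℕ → R)
    (hc : ∀ n, c n = ∑ k ∈ Finset.range (n + 1), g k * bellPartial a n k)
    (hd : ∀ n, d n = ∑ k ∈ Finset.range (n + 1), g (k + 1) * bellPartial a n k) :
    ∀ n : ℕ, c (n + 1) =
      ∑ i ∈ Finset.range (n + 1), (n.choose i : R) * a (n - i + 1) * d i := by
  intro n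
  have hconst : PowerSeries.constantCoeff (egf a - 1) = 0 := by
    simp [egf, ha0, ← PowerSeries.coeff_zero_eq_constantCoeff]
  rw [hc, Finset.sum_range_succ']
  have hB0 : bellPartial a (n+1) 0 = 0 := by
    simp [bellPartial, PowerSeries.coeff_one]
  rw [hB0, mul_zero, add_zero]
  have hL : ∀ k, g (k+1) * bellPartial a (n+1) (k+1)
      = ∑ i ∈ Finset.range (n+1),
          ((n.factorial : ℚ) / ((k.factorial : ℚ) * ((n - i).factorial : ℚ))) •
            (g (k+1) * (PowerSeries.coeff i ((egf a - 1) ^ k) * a (n - i + 1))) := by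
    intro k
    rw [aux_bell_succ, Finset.mul_sum]
    exact Finset.sum_congr rfl fun i _ => (mul_smul_comm _ _ _)
  simp only [hL]
  rw [Finset.sum_comm]
  refine Finset.sum_congr rfl fun i hi => ?_
  have hin : i ≤ n := Nat.lt_succ_iff.mp (Finset.mem_range.mp hi)
  rw [hd]
  have hext : ∑ k ∈ Finset.range (i+1), g (k+1) * bellPartial a i k
      = ∑ k ∈ Finset.range (n+1), g (k+1) * bellPartial a i k := by
    refine Finset.sum_subset (Finset.range_subset_range.mpr (by omega)) fun k _ hk => ?_
    have hik : i < k := by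
      simp only [Finset.mem_range, not_lt] at hk
      omega
    rw [bellPartial, aux_coeff_pow_eq_zero hconst hik, smul_zero, mul_zero]
  rw [hext, Finset.mul_sum]
  refine Finset.sum_congr rfl fun k _ => ?_
  rw [bellPartial]
  have hcomb : ((n.choose i : R)) * a (n-i+1) * (g (k+1) * (((i.factorial : ℚ)/(k.factorial : ℚ)) • PowerSeries.coeff i ((egf a - 1)^k)))
      = (((n.choose i : ℕ) : ℚ) * ((i.factorial : ℚ)/(k.factorial : ℚ))) •
          (a (n-i+1) * (g (k+1) * PowerSeries.coeff i ((egf a - 1)^k))) := by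
    rw [mul_smul_comm, mul_assoc, mul_smul_comm, ← nsmul_eq_mul, ← Nat.cast_smul_eq_nsmul ℚ,
      smul_smul]
  rw [hcomb]
  have hsc : (((n.choose i : ℕ) : ℚ) * ((i.factorial : ℚ)/(k.factorial : ℚ)))
      = ((n.factorial : ℚ) / ((k.factorial : ℚ) * ((n - i).factorial : ℚ))) := by
    have h := Nat.choose_mul_factorial_mul_factorial hin
    have hk : ((k.factorial : ℚ)) ≠ 0 := Nat.cast_ne_zero.mpr k.factorial_ne_zero
    have hni : (((n-i).factorial : ℚ)) ≠ 0 := Nat.cast_ne_zero.mpr (n-i).factorial_ne_zero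
    have h' : ((n.choose i : ℚ)) * (i.factorial : ℚ) * ((n-i).factorial : ℚ) = (n.factorial : ℚ) := by
      exact_mod_cast congrArg (Nat.cast : ℕ → ℚ) h
    field_simp
    linear_combination h'
  rw [hsc]
  congr 1
  ring
end

section
/- Let R be a commutative ℚ-algebra and let a : ℕ → R be a sequence with a_0 = 1 and exponential generating function f(t) = Σ_{n≥0} a_n t^n/n! ∈ R[[t]]. Regard f as a power series over the polynomial ring R[x] and define f(t)^x := exp( x · log f(t) ), where log f = Σ_{i≥1} (−1)^{i+1} (f−1)^i / i (well defined since f−1 has zero constant term) and exp is the formal exponential. Then for every k ≥ 0, the coefficient satisfies k! · [t^k]( f(t)^x ) = Σ_{i=0}^k (x)_i · B_{k,i}, as an identity in R[x], where (x)_i is the falling factorial and B_{k,i} are the partial Bell polynomials of the sequence a. In particular, for every nonnegative integer n, k!·[t^k](f(t)^n) = Σ_{i=0}^k (n)_i B_{k,i}. -/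
open Finset Polynomial

namespace BellAux
open PowerSeries
variable {S : Type*} [CommRing S]

theorem coeff_pow_eq_zero {h : PowerSeries S} (h0 : constantCoeff h = 0)
    {p n : ℕ} (hpn : p < n) : coeff p (h ^ n) = 0 := by
  have : (X : S⟦X⟧) ^ n ∣ h ^ n := pow_dvd_pow_of_dvd (X_dvd_iff.mpr h0) n
  exact (X_pow_dvd_iff.mp this) p hpn

theorem coeff_psComp (g h : PowerSeries S) (k : ℕ) :
    coeff k (psComp g h) = ∑ n ∈ Finset.range (k+1), coeff n g * coeff k (h ^ n) := by
  simp [psComp, coeff_mk]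

theorem coeff_aeval {h : S⟦X⟧} (h0 : constantCoeff h = 0) (p : S[X]) (k : ℕ) :
    coeff k (Polynomial.aeval h p) = ∑ n ∈ Finset.range (k+1), p.coeff n * coeff k (h ^ n) := by
  obtain ⟨N, hN1, hN2⟩ : ∃ N, p.natDegree < N ∧ k + 1 ≤ N := ⟨p.natDegree + k + 1, by omega, by omega⟩
  rw [Polynomial.aeval_eq_sum_range' hN1, map_sum]
  simp only [map_smul, smul_eq_mul]
  exact (Finset.sum_subset (Finset.range_subset_range.mpr hN2) (fun x _ hx => by
    rw [Finset.mem_range, not_lt] at hx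
    rw [coeff_pow_eq_zero h0 (show k < x by omega), mul_zero])).symm

theorem coeff_psComp_eq_aeval_trunc {h : S⟦X⟧} (h0 : constantCoeff h = 0) (g : S⟦X⟧)
    {k N : ℕ} (hk : k < N) :
    coeff k (psComp g h) = coeff k (Polynomial.aeval h (trunc N g)) := by
  rw [coeff_psComp, coeff_aeval h0]
  refine Finset.sum_congr rfl fun n hn => ?_
  rw [Finset.mem_range] at hn
  rw [coeff_trunc, if_pos (by omega)]

theorem psComp_mul {h : S⟦X⟧} (h0 : constantCoeff h = 0) (g₁ g₂ : S⟦X⟧) :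
    psComp (g₁ * g₂) h = psComp g₁ h * psComp g₂ h := by
  ext k
  have e1 : coeff k (psComp g₁ h * psComp g₂ h)
      = coeff k ((Polynomial.aeval h (trunc (k+1) g₁)) * (Polynomial.aeval h (trunc (k+1) g₂))) := by
    rw [PowerSeries.coeff_mul, PowerSeries.coeff_mul]
    refine Finset.sum_congr rfl fun p hp => ?_
    rw [Finset.HasAntidiagonal.mem_antidiagonal] at hp
    rw [coeff_psComp_eq_aeval_trunc h0 g₁ (show p.1 < k+1 by omega),
      coeff_psComp_eq_aeval_trunc h0 g₂ (show p.2 < k+1 by omega)]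
  rw [e1, ← map_mul, coeff_aeval h0, coeff_psComp]
  refine Finset.sum_congr rfl fun n hn => ?_
  rw [Finset.mem_range] at hn
  congr 1
  rw [Polynomial.coeff_mul, PowerSeries.coeff_mul]
  refine Finset.sum_congr rfl fun p hp => ?_
  rw [Finset.HasAntidiagonal.mem_antidiagonal] at hp
  rw [coeff_trunc, coeff_trunc, if_pos (by omega), if_pos (by omega)]

theorem psComp_one (h : S⟦X⟧) : psComp 1 h = 1 := by
  ext k
  rw [coeff_psComp]
  simp [PowerSeries.coeff_one, Finset.sum_ite_eq']

theorem psComp_pow {h : S⟦X⟧} (h0 : constantCoeff h = 0) (g : S⟦X⟧) (m : ℕ) :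
    psComp (g ^ m) h = (psComp g h) ^ m := by
  induction m with
  | zero => simpa using psComp_one h
  | succ m ih => rw [pow_succ, pow_succ, psComp_mul h0, ih]


/-- `log (1 + t)` over `ℚ`. -/
noncomputable def Lq : PowerSeries ℚ :=
  PowerSeries.mk fun i => if i = 0 then 0 else ((-1 : ℚ) ^ (i + 1) / (i : ℚ))

theorem constantCoeff_Lq : constantCoeff Lq = 0 := by
  simp [Lq, ← coeff_zero_eq_constantCoeff_apply, coeff_mk]

/-- coefficients of powers of `log (1+t)`. -/
noncomputable def ell (i m : ℕ) : ℚ := coeff i (Lq ^ m)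

theorem ell_eq_zero {i m : ℕ} (h : i < m) : ell i m = 0 :=
  coeff_pow_eq_zero constantCoeff_Lq h

theorem ell_zero_right (i : ℕ) : ell i 0 = if i = 0 then 1 else 0 := by
  simp [ell, PowerSeries.coeff_one]

theorem coeff_deriv_Lq (n : ℕ) : coeff n (d⁄dX ℚ Lq) = (-1 : ℚ) ^ n := by
  rw [PowerSeries.coeff_derivative]
  simp only [Lq, coeff_mk, Nat.succ_ne_zero, if_false]
  have h1 : ((n : ℚ) + 1) ≠ 0 := by positivity
  push_cast
  rw [pow_succ, pow_succ]
  field_simp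

theorem deriv_Lq : (1 + (X : ℚ⟦X⟧)) * (d⁄dX ℚ Lq) = 1 := by
  ext n
  rw [add_mul, one_mul, map_add, PowerSeries.coeff_one, mul_comm (X : ℚ⟦X⟧)]
  cases n with
  | zero => rw [coeff_zero_mul_X, coeff_deriv_Lq]; norm_num
  | succ n =>
    rw [coeff_succ_mul_X, coeff_deriv_Lq, coeff_deriv_Lq, if_neg (Nat.succ_ne_zero n), pow_succ]
    ring

theorem ell_rec (i m : ℕ) :
    ((i : ℚ) + 1) * ell (i+1) (m+1) + (i : ℚ) * ell i (m+1) = ((m : ℚ) + 1) * ell i m := by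
  have hD : (1 + (X : ℚ⟦X⟧)) * (d⁄dX ℚ (Lq ^ (m+1))) = ((m : ℚ⟦X⟧) + 1) * Lq ^ m := by
    rw [Derivation.leibniz_pow, Nat.add_sub_cancel]
    calc (1 + (X : ℚ⟦X⟧)) * ((m+1) • Lq ^ m • d⁄dX ℚ Lq)
        = ((m : ℚ⟦X⟧) + 1) * (Lq ^ m * ((1 + (X : ℚ⟦X⟧)) * (d⁄dX ℚ Lq))) := by
          simp only [smul_eq_mul, nsmul_eq_mul]
          push_cast
          ring
      _ = ((m : ℚ⟦X⟧) + 1) * Lq ^ m := by rw [deriv_Lq, mul_one]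
  have := congrArg (PowerSeries.coeff i) hD
  rw [add_mul, one_mul, map_add, mul_comm (X : ℚ⟦X⟧)] at this
  have hR : coeff i (((m : ℚ⟦X⟧) + 1) * Lq ^ m) = ((m : ℚ) + 1) * ell i m := by
    have : ((m : ℚ⟦X⟧) + 1) = PowerSeries.C ((m : ℚ) + 1) := by push_cast; simp
    rw [this, PowerSeries.coeff_C_mul, ell]
  rw [hR] at this
  cases i with
  | zero =>
    rw [coeff_zero_mul_X, PowerSeries.coeff_derivative, add_zero] at this
    simp only [ell] at this ⊢
    push_cast at this ⊢
    linarith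
  | succ j =>
    rw [coeff_succ_mul_X, PowerSeries.coeff_derivative, PowerSeries.coeff_derivative] at this
    simp only [ell] at this ⊢
    push_cast at this ⊢
    linarith

theorem ell_zero_left (m : ℕ) : ell 0 m = if m = 0 then 1 else 0 := by
  cases m with
  | zero => simp [ell, PowerSeries.coeff_one]
  | succ m =>
    rw [ell, coeff_zero_eq_constantCoeff_apply, map_pow, constantCoeff_Lq, zero_pow (Nat.succ_ne_zero m)]
    simp

theorem descPochhammer_coeff (i : ℕ) : ∀ m : ℕ,
    (descPochhammer ℚ i).coeff m * (m.factorial : ℚ) = (i.factorial : ℚ) * ell i m := by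
  induction i with
  | zero =>
    intro m
    simp only [descPochhammer_zero, Polynomial.coeff_one, ell_zero_left, Nat.factorial_zero]
    split_ifs with h
    · subst h; simp
    · simp
  | succ i ih =>
    intro m
    rw [descPochhammer_succ_right]
    have hC : ((i : ℚ[X])) = Polynomial.C (i : ℚ) := by
      rw [Polynomial.C_eq_natCast]
    cases m with
    | zero =>
      rw [hC, Polynomial.mul_coeff_zero]
      have h1 : ell (i+1) 0 = 0 := by rw [ell_zero_right]; simp
      rw [h1, mul_zero]
      have h0 := ih 0
      rw [ell_zero_right] at h0
      rcases Nat.eq_zero_or_pos i with h | h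
      · subst h; simp
      · rw [if_neg (by omega), mul_zero] at h0
        simp only [Nat.factorial_zero, Nat.cast_one, mul_one] at h0 ⊢
        rw [h0]; ring
    | succ m =>
      rw [hC, Polynomial.coeff_mul_X_sub_C]
      have hrec := ell_rec i m
      have h1 := ih m
      have h2 := ih (m+1)
      rw [Nat.factorial_succ] at h2 ⊢
      rw [Nat.factorial_succ (i)]
      push_cast at h1 h2 ⊢
      linear_combination ((m : ℚ)+1) * h1 - (i : ℚ) * h2 - (i.factorial : ℚ) * hrec


end BellAux

section Main
open PowerSeries BellAux

variable {R : Type*} [CommRing R] [Algebra ℚ R]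

theorem egf_constantCoeff (a : ℕ → R) (ha0 : a 0 = 1) :
    PowerSeries.constantCoeff (egf a - 1) = 0 := by
  rw [map_sub, ← PowerSeries.coeff_zero_eq_constantCoeff_apply, ← PowerSeries.coeff_zero_eq_constantCoeff_apply]
  rw [show egf a = PowerSeries.mk fun n => ((n.factorial : ℚ)⁻¹) • a n from rfl, PowerSeries.coeff_mk,
    PowerSeries.coeff_one, ha0]
  simp

theorem key_i (k i : ℕ) (hik : i ≤ k) :
    ∑ m ∈ Finset.range (k+1),
        Polynomial.C ((k.factorial : R) * algebraMap ℚ R (1 / m.factorial) * algebraMap ℚ R (ell i m))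
          * Polynomial.X ^ m =
      descPochhammer R i * algebraMap ℚ (Polynomial R) ((k.factorial : ℚ) / (i.factorial : ℚ)) := by
  ext n
  rw [Polynomial.finset_sum_coeff]
  simp only [Polynomial.coeff_C_mul, Polynomial.coeff_X_pow, mul_ite, mul_one, mul_zero]
  rw [Finset.sum_ite_eq (Finset.range (k+1)) n]
  have hdp : (descPochhammer R i).coeff n = algebraMap ℚ R ((descPochhammer ℚ i).coeff n) := by
    rw [← descPochhammer_map (algebraMap ℚ R) i, Polynomial.coeff_map]
  have hdc := descPochhammer_coeff i n
  have hn : ((n.factorial : ℚ)) ≠ 0 := Nat.cast_ne_zero.mpr (Nat.factorial_ne_zero n)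
  have hi : ((i.factorial : ℚ)) ≠ 0 := Nat.cast_ne_zero.mpr (Nat.factorial_ne_zero i)
  have hRHS : (descPochhammer R i * algebraMap ℚ (Polynomial R)
      ((k.factorial : ℚ) / (i.factorial : ℚ))).coeff n =
      algebraMap ℚ R ((descPochhammer ℚ i).coeff n * ((k.factorial : ℚ) / (i.factorial : ℚ))) := by
    rw [IsScalarTower.algebraMap_apply ℚ R (Polynomial R), Polynomial.algebraMap_eq,
      Polynomial.coeff_mul_C, hdp, map_mul]
  rw [hRHS]
  split_ifs with h
  · rw [show (k.factorial : R) = algebraMap ℚ R (k.factorial : ℚ) by rw [map_natCast],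
      ← map_mul, ← map_mul]
    congr 1
    have : (descPochhammer ℚ i).coeff n = (i.factorial : ℚ) * ell i n / (n.factorial : ℚ) := by
      field_simp
      linarith [hdc]
    rw [this]
    field_simp
  · have hell : ell i n = 0 := ell_eq_zero (by simp only [Finset.mem_range, not_lt] at h; omega)
    rw [hell, mul_zero] at hdc
    have : (descPochhammer ℚ i).coeff n = 0 := by
      rcases mul_eq_zero.mp hdc with h | h
      · exact h
      · exact absurd h hn
    rw [this, zero_mul, map_zero]

end Main

section Main2
open PowerSeries BellAux

variable {R : Type*} [CommRing R] [Algebra ℚ R]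

theorem part2 (a : ℕ → R) (ha0 : a 0 = 1) (n k : ℕ) :
    (k.factorial : R) * PowerSeries.coeff k ((egf a) ^ n) =
      ∑ i ∈ Finset.range (k + 1), (n.descFactorial i : R) * bellPartial a k i := by
  have h0 := egf_constantCoeff a ha0
  have hegf : egf a = (egf a - 1) + 1 := by ring
  set F : ℕ → R := fun i => (n.descFactorial i : R) * bellPartial a k i with hF
  have hterm : ∀ i : ℕ,
      (k.factorial : R) * (PowerSeries.coeff k ((egf a - 1) ^ i) * (n.choose i : R)) = F i := by
    intro i
    have hkey : algebraMap ℚ R (i.factorial : ℚ) *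
        algebraMap ℚ R ((k.factorial : ℚ) / (i.factorial : ℚ)) = algebraMap ℚ R (k.factorial : ℚ) := by
      rw [← map_mul]
      congr 1
      field_simp
    have hbp : bellPartial a k i = algebraMap ℚ R ((k.factorial : ℚ) / (i.factorial : ℚ)) *
        PowerSeries.coeff k ((egf a - 1) ^ i) := by
      rw [show bellPartial a k i = ((k.factorial : ℚ) / (i.factorial : ℚ)) •
        (PowerSeries.coeff k ((egf a - 1) ^ i)) from rfl, Algebra.smul_def]
    rw [hF]
    simp only
    rw [hbp, Nat.descFactorial_eq_factorial_mul_choose]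
    push_cast
    rw [show ((k.factorial : R)) = algebraMap ℚ R (k.factorial : ℚ) by rw [map_natCast],
        show ((i.factorial : R)) = algebraMap ℚ R (i.factorial : ℚ) by rw [map_natCast]]
    rw [← hkey]
    ring
  have hL : (k.factorial : R) * PowerSeries.coeff k ((egf a) ^ n)
      = ∑ j ∈ Finset.range (n+1), F j := by
    rw [hegf, add_pow, map_sum, Finset.mul_sum]
    refine Finset.sum_congr rfl fun j _ => ?_
    rw [one_pow, mul_one, ← map_natCast (PowerSeries.C (R := R)), PowerSeries.coeff_mul_C]
    exact hterm j
  have hF1 : ∀ j, n < j → F j = 0 := by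
    intro j hj
    rw [hF]
    simp only
    rw [Nat.descFactorial_eq_zero_iff_lt.mpr hj]
    simp
  have hF2 : ∀ j, k < j → F j = 0 := by
    intro j hj
    rw [hF]
    simp only
    rw [show bellPartial a k j = ((k.factorial : ℚ) / (j.factorial : ℚ)) •
        (PowerSeries.coeff k ((egf a - 1) ^ j)) from rfl,
      coeff_pow_eq_zero h0 hj, smul_zero, mul_zero]
  have e1 : ∑ j ∈ Finset.range (n+1), F j = ∑ j ∈ Finset.range (max n k + 1), F j :=
    Finset.sum_subset (Finset.range_subset_range.mpr (by omega))
      (fun x _ hx => hF1 x (by simp only [Finset.mem_range, not_lt] at hx ⊢; omega))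
  have e2 : ∑ j ∈ Finset.range (k+1), F j = ∑ j ∈ Finset.range (max n k + 1), F j :=
    Finset.sum_subset (Finset.range_subset_range.mpr (by omega))
      (fun x _ hx => hF2 x (by simp only [Finset.mem_range, not_lt] at hx ⊢; omega))
  rw [hL, e1, ← e2]

end Main2

section Main3
open PowerSeries BellAux

variable {R : Type*} [CommRing R] [Algebra ℚ R]

theorem part1 (a : ℕ → R) (ha0 : a 0 = 1)
    (fX : PowerSeries (Polynomial R))
    (hfX : fX = PowerSeries.map (Polynomial.C : R →+* Polynomial R) (egf a))
    (L : PowerSeries (Polynomial R))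
    (hL : L = PowerSeries.mk fun i =>
      if i = 0 then 0 else (((-1 : ℚ) ^ (i + 1) / (i : ℚ)) • (1 : Polynomial R)))
    (fpowx : PowerSeries (Polynomial R))
    (hfpowx : fpowx = psComp (PowerSeries.exp (Polynomial R))
      (PowerSeries.C Polynomial.X * psComp L (fX - 1)))
    (k : ℕ) :
    (k.factorial : Polynomial R) * PowerSeries.coeff k fpowx =
      ∑ i ∈ Finset.range (k + 1), descPochhammer R i * Polynomial.C (bellPartial a k i) := by
  have h0R := egf_constantCoeff a ha0
  have hfX1 : fX - 1 = PowerSeries.map (Polynomial.C : R →+* Polynomial R) (egf a - 1) := by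
    rw [hfX, map_sub, map_one]
  have hu : PowerSeries.constantCoeff (fX - 1) = 0 := by
    rw [hfX1, ← PowerSeries.coeff_zero_eq_constantCoeff_apply, PowerSeries.coeff_map,
      PowerSeries.coeff_zero_eq_constantCoeff_apply, h0R, map_zero]
  have hLm : L = PowerSeries.map (algebraMap ℚ (Polynomial R)) Lq := by
    rw [hL]
    ext i
    rw [PowerSeries.coeff_map, PowerSeries.coeff_mk,
      show Lq = PowerSeries.mk fun i => if i = 0 then 0 else ((-1 : ℚ) ^ (i + 1) / (i : ℚ)) from rfl,
      PowerSeries.coeff_mk]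
    split_ifs with h
    · rw [map_zero]
    · rw [Algebra.algebraMap_eq_smul_one]
  have hgm : ∀ m : ℕ, PowerSeries.coeff k
        ((PowerSeries.C Polynomial.X * psComp L (fX - 1)) ^ m)
      = Polynomial.X ^ m * ∑ i ∈ Finset.range (k+1),
          algebraMap ℚ (Polynomial R) (ell i m)
            * Polynomial.C (PowerSeries.coeff k ((egf a - 1) ^ i)) := by
    intro m
    rw [mul_pow, ← map_pow, PowerSeries.coeff_C_mul, ← psComp_pow hu, coeff_psComp]
    congr 1
    refine Finset.sum_congr rfl fun i _ => ?_
    congr 1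
    · rw [hLm, ← map_pow, PowerSeries.coeff_map]
      rfl
    · rw [hfX1, ← map_pow, PowerSeries.coeff_map]
  have expand : (k.factorial : Polynomial R) * PowerSeries.coeff k fpowx
      = ∑ m ∈ Finset.range (k+1), ∑ i ∈ Finset.range (k+1),
          (Polynomial.C ((k.factorial : R) * algebraMap ℚ R (1/(m.factorial : ℚ))
              * algebraMap ℚ R (ell i m)) * Polynomial.X ^ m)
            * Polynomial.C (PowerSeries.coeff k ((egf a - 1) ^ i)) := by
    rw [hfpowx, coeff_psComp, Finset.mul_sum]
    refine Finset.sum_congr rfl fun m _ => ?_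
    rw [hgm m, PowerSeries.coeff_exp, Finset.mul_sum, Finset.mul_sum, Finset.mul_sum]
    refine Finset.sum_congr rfl fun i _ => ?_
    simp only [IsScalarTower.algebraMap_apply ℚ R (Polynomial R), Polynomial.algebraMap_eq,
      map_mul, ← map_natCast (Polynomial.C : R →+* Polynomial R) k.factorial]
    ring
  rw [expand, Finset.sum_comm]
  refine Finset.sum_congr rfl fun i hi => ?_
  rw [Finset.mem_range] at hi
  rw [← Finset.sum_mul, key_i k i (by omega),
    show bellPartial a k i = ((k.factorial : ℚ) / (i.factorial : ℚ)) •
      (PowerSeries.coeff k ((egf a - 1) ^ i)) from rfl,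
    Algebra.smul_def, map_mul, IsScalarTower.algebraMap_apply ℚ R (Polynomial R),
    Polynomial.algebraMap_eq]
  ring

end Main3

/-- The formal power `f(t)^x = exp(x log f(t))` has coefficients
`k! [t^k] f(t)^x = Σ_i (x)_i B_{k,i}` in `R[x]`; in particular for a natural number
`n`, `k! [t^k] f(t)^n = Σ_i (n)_i B_{k,i}` in `R`. -/
theorem pow_x_coeff (R : Type*) [CommRing R] [Algebra ℚ R]
    (a : ℕ → R) (ha0 : a 0 = 1)
    (fX : PowerSeries (Polynomial R))
    (hfX : fX = PowerSeries.map (Polynomial.C : R →+* Polynomial R) (egf a))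
    (L : PowerSeries (Polynomial R))
    (hL : L = PowerSeries.mk fun i =>
      if i = 0 then 0 else (((-1 : ℚ) ^ (i + 1) / (i : ℚ)) • (1 : Polynomial R)))
    (fpowx : PowerSeries (Polynomial R))
    (hfpowx : fpowx = psComp (PowerSeries.exp (Polynomial R))
      (PowerSeries.C Polynomial.X * psComp L (fX - 1))) :
    (∀ k : ℕ,
      (k.factorial : Polynomial R) * PowerSeries.coeff k fpowx =
        ∑ i ∈ Finset.range (k + 1), descPochhammer R i * Polynomial.C (bellPartial a k i)) ∧
    (∀ n k : ℕ,
      (k.factorial : R) * PowerSeries.coeff k ((egf a) ^ n) =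
        ∑ i ∈ Finset.range (k + 1), (n.descFactorial i : R) * bellPartial a k i) := by
  constructor
  · intro k
    exact part1 a ha0 fX hfX L hL fpowx hfpowx k
  · intro n k
    exact part2 a ha0 n k
end

section
/- Let R be a commutative ℚ-algebra and let a : ℕ → R be a sequence with a_0 = 1. Define the polynomials q_k(x) = Σ_{i=0}^k (x)_i · B_{k,i} ∈ R[x], where (x)_i is the falling factorial and B_{k,i} are the partial Bell polynomials of the sequence a. Then the sequence {q_k} is of binomial type: q_k(x+y) = Σ_{i=0}^k C(k,i) · q_i(x) · q_{k−i}(y) for all k ≥ 0, as an identity in R[x,y]. -/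
open Finset Polynomial

lemma coeff_pow_zero_of_constantCoeff {R : Type*} [CommRing R] (g : PowerSeries R)
    (hg : PowerSeries.constantCoeff g = 0) :
    ∀ (k n : ℕ), n < k → PowerSeries.coeff n (g ^ k) = 0 := by
  intro k
  induction k with
  | zero => intro n h; omega
  | succ k ih =>
    intro n h
    rw [pow_succ, PowerSeries.coeff_mul]
    apply Finset.sum_eq_zero
    rintro ⟨i, j⟩ hij
    replace hij : i + j = n := by simpa using hij
    rcases Nat.eq_zero_or_pos j with hj | hj
    · subst hj
      rw [PowerSeries.coeff_zero_eq_constantCoeff, hg, mul_zero]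
    · rw [ih i (by omega), zero_mul]

lemma natCast_mul_smul {R : Type*} [CommRing R] [Algebra ℚ R] (n : ℕ) (q : ℚ) (r : R) :
    (n : R) * (q • r) = ((n * q : ℚ)) • r := by
  rw [mul_smul, ← map_natCast (algebraMap ℚ R) n, ← Algebra.smul_def]

lemma bell_conv {R : Type*} [CommRing R] [Algebra ℚ R] (a : ℕ → R) (j l k : ℕ) :
    ∑ m ∈ Finset.range (k+1), (k.choose m : R) * (bellPartial a m j * bellPartial a (k-m) l)
      = ((j+l).choose j : R) * bellPartial a k (j+l) := by
  set g := egf a - 1 with hgdef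
  have key : ∀ m ∈ Finset.range (k+1),
      (k.choose m : R) * (bellPartial a m j * bellPartial a (k-m) l)
        = ((k.factorial : ℚ) / ((j.factorial : ℚ) * (l.factorial : ℚ))) •
            (PowerSeries.coeff m (g ^ j) * PowerSeries.coeff (k - m) (g ^ l)) := by
    intro m hm
    rw [Finset.mem_range] at hm
    have hm' : m ≤ k := by omega
    rw [bellPartial, bellPartial, smul_mul_smul_comm, natCast_mul_smul]
    congr 1
    rw [Nat.cast_choose ℚ hm']
    have h1 : (m.factorial : ℚ) ≠ 0 := Nat.cast_ne_zero.mpr m.factorial_ne_zero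
    have h2 : ((k - m).factorial : ℚ) ≠ 0 := Nat.cast_ne_zero.mpr (k - m).factorial_ne_zero
    have h3 : (j.factorial : ℚ) ≠ 0 := Nat.cast_ne_zero.mpr j.factorial_ne_zero
    have h4 : (l.factorial : ℚ) ≠ 0 := Nat.cast_ne_zero.mpr l.factorial_ne_zero
    field_simp
  rw [Finset.sum_congr rfl key, ← Finset.smul_sum]
  have hc : ∑ m ∈ Finset.range (k+1),
      PowerSeries.coeff m (g ^ j) * PowerSeries.coeff (k - m) (g ^ l)
        = PowerSeries.coeff k (g ^ (j + l)) := by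
    rw [pow_add, PowerSeries.coeff_mul, Finset.Nat.sum_antidiagonal_eq_sum_range_succ_mk]
  rw [hc, bellPartial, natCast_mul_smul]
  congr 1
  rw [Nat.cast_choose ℚ (Nat.le_add_right j l)]
  have h3 : (j.factorial : ℚ) ≠ 0 := Nat.cast_ne_zero.mpr j.factorial_ne_zero
  have h4 : (l.factorial : ℚ) ≠ 0 := Nat.cast_ne_zero.mpr l.factorial_ne_zero
  have h5 : ((j+l).factorial : ℚ) ≠ 0 := Nat.cast_ne_zero.mpr (j+l).factorial_ne_zero
  rw [Nat.add_sub_cancel_left]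
  field_simp

lemma aeval_descPochhammer_smeval {R S : Type*} [CommRing R] [CommRing S] [Algebra R S]
    (z : S) (n : ℕ) : aeval z (descPochhammer R n) = (descPochhammer ℤ n).smeval z := by
  rw [aeval_def, eval₂_eq_eval_map, descPochhammer_map,
    ← descPochhammer_map (Int.castRingHom S), eval_map, ← algebraMap_int_eq, ← aeval_def,
    aeval_eq_smeval]

/-- The polynomials `q_k(x) = Σ_i (x)_i B_{k,i}` are of binomial type:
`q_k(x+y) = Σ_i C(k,i) q_i(x) q_{k-i}(y)`, as an identity in `R[x,y]`
(realized as `(R[x])[y]`, with `x` and `y` the two indeterminates). -/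
theorem partition_umbra_binomial_type (R : Type*) [CommRing R] [Algebra ℚ R]
    (a : ℕ → R) (ha0 : a 0 = 1)
    (q : ℕ → Polynomial R)
    (hq : ∀ k, q k = ∑ i ∈ Finset.range (k + 1),
      descPochhammer R i * Polynomial.C (bellPartial a k i)) :
    ∀ k : ℕ,
      Polynomial.aeval
          (Polynomial.C Polynomial.X + Polynomial.X : Polynomial (Polynomial R)) (q k) =
        ∑ i ∈ Finset.range (k + 1), (k.choose i : Polynomial (Polynomial R)) *
          (Polynomial.aeval (Polynomial.C Polynomial.X : Polynomial (Polynomial R)) (q i) *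
            Polynomial.aeval (Polynomial.X : Polynomial (Polynomial R)) (q (k - i))) := by
  intro k
  set S := Polynomial (Polynomial R) with hS
  set x : S := Polynomial.C Polynomial.X with hx
  set y : S := Polynomial.X with hy
  set A := algebraMap R S with hA
  set B := bellPartial a with hB
  set P : ℕ → S := fun j => (descPochhammer ℤ j).smeval x with hP
  set Qy : ℕ → S := fun l => (descPochhammer ℤ l).smeval y with hQy
  -- vanishing of Bell polynomials
  have hg0 : PowerSeries.constantCoeff (egf a - 1) = 0 := by
    simp [egf, ha0, ← PowerSeries.coeff_zero_eq_constantCoeff]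
  have hBz : ∀ {n m : ℕ}, n < m → B n m = 0 := by
    intro n m h
    rw [hB, bellPartial, coeff_pow_zero_of_constantCoeff _ hg0 m n h, smul_zero]
  -- aeval of q
  have hQ : ∀ (z : S) (n : ℕ), aeval z (q n)
      = ∑ i ∈ Finset.range (n+1), (descPochhammer ℤ i).smeval z * A (B n i) := by
    intro z n
    rw [hq n, map_sum]
    refine Finset.sum_congr rfl fun i _ => ?_
    rw [map_mul, aeval_C, aeval_descPochhammer_smeval]
  -- the common middle term
  set t : ℕ → ℕ → S := fun j l => ((j+l).choose j : S) * (P j * Qy l) * A (B k (j+l)) with ht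
  have hT : ∀ j l, k < j + l → t j l = 0 := by
    intro j l h
    rw [ht]
    simp only
    rw [hBz h, map_zero, mul_zero]
  -- LHS
  have hL : aeval (x + y) (q k)
      = ∑ j ∈ Finset.range (k+1), ∑ l ∈ Finset.range (k+1), t j l := by
    rw [hQ]
    have step1 : ∀ n ∈ Finset.range (k+1),
        (descPochhammer ℤ n).smeval (x + y) * A (B k n)
          = ∑ j ∈ Finset.range (k+1), (n.choose j : S) * (P j * Qy (n - j)) * A (B k n) := by
      intro n hn
      rw [Finset.mem_range] at hn
      rw [Ring.descPochhammer_smeval_add n (Commute.all x y),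
        Finset.Nat.sum_antidiagonal_eq_sum_range_succ_mk, Finset.sum_mul]
      rw [Finset.sum_subset (Finset.range_subset_range.mpr (by omega : n.succ ≤ k + 1))]
      intro j _ hj
      rw [Finset.mem_range, Nat.succ_eq_add_one] at hj
      rw [Nat.choose_eq_zero_of_lt (by omega), Nat.cast_zero, zero_mul, zero_mul]
    rw [Finset.sum_congr rfl step1, Finset.sum_comm]
    refine Finset.sum_congr rfl fun j hj => ?_
    rw [Finset.mem_range] at hj
    have hjk : j ≤ k := by omega
    -- LHS inner sum over n; drop n < j, shift
    have drop : ∑ n ∈ Finset.range (k+1), (n.choose j : S) * (P j * Qy (n - j)) * A (B k n)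
        = ∑ n ∈ Finset.Ico j (k+1), (n.choose j : S) * (P j * Qy (n - j)) * A (B k n) := by
      rw [Finset.range_eq_Ico,
        ← Finset.sum_Ico_consecutive _ (Nat.zero_le j) (by omega : j ≤ k + 1)]
      rw [Finset.sum_eq_zero, zero_add]
      intro n hn
      rw [Finset.mem_Ico] at hn
      rw [Nat.choose_eq_zero_of_lt (by omega), Nat.cast_zero, zero_mul, zero_mul]
    rw [drop, Finset.sum_Ico_eq_sum_range]
    have ext : ∑ l ∈ Finset.range (k+1), t j l
        = ∑ l ∈ Finset.range (k+1-j), t j l := by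
      rw [Finset.sum_subset (Finset.range_subset_range.mpr (by omega : k+1-j ≤ k+1))]
      intro l _ hl
      rw [Finset.mem_range] at hl
      exact hT j l (by omega)
    rw [ext]
    refine Finset.sum_congr rfl fun l hl => ?_
    rw [Finset.mem_range] at hl
    rw [ht]
    simp only
    rw [Nat.add_sub_cancel_left, Nat.add_comm j l, Nat.add_comm l j]
  rw [hL]
  -- RHS
  have hR : ∀ m ∈ Finset.range (k+1),
      (k.choose m : S) * (aeval x (q m) * aeval y (q (k - m)))
        = ∑ j ∈ Finset.range (k+1), ∑ l ∈ Finset.range (k+1),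
            (P j * Qy l) * A ((k.choose m : R) * (B m j * B (k-m) l)) := by
    intro m hm
    rw [Finset.mem_range] at hm
    have e1 : aeval x (q m) = ∑ j ∈ Finset.range (k+1), P j * A (B m j) := by
      rw [hQ]
      rw [Finset.sum_subset (Finset.range_subset_range.mpr (by omega : m + 1 ≤ k + 1))]
      intro j _ hj
      rw [Finset.mem_range] at hj
      rw [hBz (by omega), map_zero, mul_zero]
    have e2 : aeval y (q (k - m)) = ∑ l ∈ Finset.range (k+1), Qy l * A (B (k-m) l) := by
      rw [hQ]
      rw [Finset.sum_subset (Finset.range_subset_range.mpr (by omega : k - m + 1 ≤ k + 1))]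
      intro l _ hl
      rw [Finset.mem_range] at hl
      rw [hBz (by omega), map_zero, mul_zero]
    rw [e1, e2, Finset.sum_mul_sum, Finset.mul_sum]
    refine Finset.sum_congr rfl fun j _ => ?_
    rw [Finset.mul_sum]
    refine Finset.sum_congr rfl fun l _ => ?_
    rw [map_mul, map_mul, map_natCast]
    ring
  have hR2 : ∑ i ∈ Finset.range (k+1), (k.choose i : S) * (aeval x (q i) * aeval y (q (k - i)))
      = ∑ j ∈ Finset.range (k+1), ∑ l ∈ Finset.range (k+1), t j l := by
    rw [Finset.sum_congr rfl hR, Finset.sum_comm]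
    refine Finset.sum_congr rfl fun j _ => ?_
    rw [Finset.sum_comm]
    refine Finset.sum_congr rfl fun l _ => ?_
    rw [← Finset.mul_sum, ← map_sum, hB, bell_conv, map_mul, map_natCast, ht]
    ring
  exact hR2.symm
end
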